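/- (Interpolation at odd roots of unity.) For every N ∈ ℕ there exist real numbers β₀, β₁, …, β_{2N−1} with β_ν = 0 for ν even, such that for every odd k with 1 ≤ k ≤ 4N−1, k ≠ 2N: Σ_{ν=0}^{2N−1} β_ν · exp(kνπi/(2N)) equals i if 0 < k < 2N, and equals −i if 2N < k < 4N. -/

import Mathlib

open Finset Complex

lemma my_sum_range_double (f : ℕ → ℂ) (n : ℕ) :
    ∑ ν ∈ range (2*n), f ν = ∑ j ∈ range n, (f (2*j) + f (2*j+1)) := by
  induction n with
  | zero => simp
  | succ n ih =>
    rw [Nat.mul_succ, sum_range_succ, sum_range_succ, sum_range_succ, ih, add_assoc]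

noncomputable def zz (N j : ℕ) : ℂ :=
  Complex.exp (((2*j+1 : ℕ) : ℂ) * (Real.pi : ℂ) * Complex.I / N)

lemma zz_pow_N (N j : ℕ) (hN : 0 < N) : zz N j ^ N = -1 := by
  have hN' : (N : ℂ) ≠ 0 := Nat.cast_ne_zero.2 hN.ne'
  rw [zz, ← Complex.exp_nat_mul]
  have : (N : ℂ) * (((2*j+1 : ℕ) : ℂ) * (Real.pi : ℂ) * Complex.I / N)
      = ((2*j+1 : ℕ) : ℂ) * ((Real.pi : ℂ) * Complex.I) := by
    field_simp
  rw [this, Complex.exp_nat_mul, Complex.exp_pi_mul_I]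
  exact (odd_two_mul_add_one j).neg_one_pow

lemma zz_pow (N j t : ℕ) (hN : 0 < N) :
    zz N j ^ t = Complex.exp ((t:ℂ) * (Real.pi : ℂ) * Complex.I / N) *
      Complex.exp (2 * (Real.pi : ℂ) * Complex.I * t / N) ^ j := by
  have hN' : (N : ℂ) ≠ 0 := Nat.cast_ne_zero.2 hN.ne'
  rw [zz, ← Complex.exp_nat_mul, ← Complex.exp_nat_mul, ← Complex.exp_add]
  congr 1
  push_cast
  field_simp
  ring

lemma sum_zz_pow (N t : ℕ) (hN : 0 < N) (ht : t < 2*N) :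
    ∑ j ∈ range N, zz N j ^ t =
      if t = 0 then (N:ℂ) else if t = N then -(N:ℂ) else 0 := by
  have hN' : (N : ℂ) ≠ 0 := Nat.cast_ne_zero.2 hN.ne'
  rcases eq_or_ne t 0 with rfl | ht0
  · simp
  rcases eq_or_ne t N with htN | htN
  · subst htN
    simp [zz_pow_N _ _ hN, ht0]
  have hr : Complex.exp (2 * (Real.pi : ℂ) * Complex.I * t / N) ≠ 1 := by
    intro h
    rw [Complex.exp_eq_one_iff] at h
    obtain ⟨n, hn⟩ := h
    have hπ : (Real.pi : ℂ) ≠ 0 := by exact_mod_cast Real.pi_ne_zero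
    have hc : (2 * (Real.pi:ℂ) * Complex.I) * t = (2 * (Real.pi:ℂ) * Complex.I) * (n * N) := by
      field_simp at hn
      linear_combination (2 * (Real.pi:ℂ) * Complex.I) * hn
    have hne : (2 * (Real.pi:ℂ) * Complex.I) ≠ 0 := by
      simp [hπ, Complex.I_ne_zero]
    have h0 : (t : ℂ) = n * N := mul_left_cancel₀ hne hc
    have h1 : (t : ℤ) = n * N := by exact_mod_cast h0
    have ht' : (1:ℤ) ≤ (t:ℤ) := by exact_mod_cast Nat.one_le_iff_ne_zero.2 ht0
    have ht2 : (t:ℤ) < 2*N := by exact_mod_cast ht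
    have hNpos : (0:ℤ) < (N:ℤ) := by exact_mod_cast hN
    have hn1 : 1 ≤ n := by nlinarith
    have hn2 : n < 2 := by nlinarith
    have : n = 1 := by omega
    subst this
    simp at h1
    exact htN (by exact_mod_cast h1)
  simp only [zz_pow N _ t hN, ← Finset.mul_sum]
  rw [geom_sum_eq hr, ← Complex.exp_nat_mul]
  have : (N:ℂ) * (2 * (Real.pi : ℂ) * Complex.I * t / N) = t * (2 * (Real.pi:ℂ) * Complex.I) := by
    field_simp
  rw [this, Complex.exp_nat_mul, Complex.exp_two_pi_mul_I, one_pow]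
  simp [ht0, htN]

lemma zz_ne_one (N j : ℕ) (hN : 0 < N) : zz N j ≠ 1 := by
  intro h
  have := zz_pow_N N j hN
  rw [h, one_pow] at this
  norm_num at this

lemma zz_ne_zero (N j : ℕ) : zz N j ≠ 0 := Complex.exp_ne_zero _

lemma zz_reflect (N j : ℕ) (hj : j < N) : zz N (N - 1 - j) = (zz N j)⁻¹ := by
  have h1 : (2*(N-1-j)+1 : ℕ) = 2*N - (2*j+1) := by omega
  rw [zz, zz, ← Complex.exp_neg, h1]
  rw [Complex.exp_eq_exp_iff_exists_int]
  refine ⟨1, ?_⟩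
  have hc : ((2*N - (2*j+1) : ℕ) : ℂ) = 2*N - (2*j+1 : ℕ) := by
    push_cast [Nat.cast_sub (by omega : 2*j+1 ≤ 2*N)]; ring
  have hN' : (N : ℂ) ≠ 0 := Nat.cast_ne_zero.2 (by omega)
  rw [hc]
  field_simp
  ring

lemma sum_zz_inv (N : ℕ) (hN : 0 < N) :
    ∑ j ∈ range N, (zz N j - 1)⁻¹ = -(N:ℂ)/2 := by
  have key : ∀ j ∈ range N, (zz N j - 1)⁻¹ + (zz N (N-1-j) - 1)⁻¹ = -1 := by
    intro j hj
    rw [zz_reflect N j (mem_range.1 hj)]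
    have hz1 : zz N j - 1 ≠ 0 := sub_ne_zero.2 (zz_ne_one N j hN)
    have hz0 : zz N j ≠ 0 := zz_ne_zero N j
    have h1' : 1 - zz N j ≠ 0 := fun h => hz1 (by linear_combination -h)
    have : ((zz N j)⁻¹ - 1) = -(zz N j - 1) / zz N j := by field_simp; ring
    rw [this, inv_div]
    field_simp
    ring
  have h2 : (2:ℂ) * ∑ j ∈ range N, (zz N j - 1)⁻¹ = -N := by
    calc (2:ℂ) * ∑ j ∈ range N, (zz N j - 1)⁻¹
        = ∑ j ∈ range N, (zz N j - 1)⁻¹ + ∑ j ∈ range N, (zz N (N-1-j) - 1)⁻¹ := by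
          rw [Finset.sum_range_reflect (fun j => (zz N j - 1)⁻¹) N, two_mul]
      _ = ∑ j ∈ range N, ((zz N j - 1)⁻¹ + (zz N (N-1-j) - 1)⁻¹) := by
          rw [Finset.sum_add_distrib]
      _ = ∑ j ∈ range N, (-1 : ℂ) := Finset.sum_congr rfl key
      _ = -N := by simp
  have := h2
  field_simp at this ⊢
  linear_combination this

lemma sum_main (N m : ℕ) (hN : 0 < N) (hm1 : 1 ≤ m) (hm2 : m ≤ 2*N) :
    ∑ j ∈ range N, zz N j ^ m / (zz N j - 1) =
      if m ≤ N then (N:ℂ)/2 else -(N:ℂ)/2 := by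
  have step : ∀ j ∈ range N,
      zz N j ^ m / (zz N j - 1) = (∑ t ∈ range m, zz N j ^ t) + (zz N j - 1)⁻¹ := by
    intro j _
    have hz1 : zz N j - 1 ≠ 0 := sub_ne_zero.2 (zz_ne_one N j hN)
    field_simp
    linear_combination (-1 : ℂ) * geom_sum_mul (zz N j) m
  rw [Finset.sum_congr rfl step, Finset.sum_add_distrib, sum_zz_inv N hN, Finset.sum_comm]
  have inner : ∀ t ∈ range m, ∑ j ∈ range N, zz N j ^ t =
      (if t = 0 then (N:ℂ) else 0) + (if t = N then -(N:ℂ) else 0) := by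
    intro t ht
    rw [sum_zz_pow N t hN (lt_of_lt_of_le (mem_range.1 ht) hm2)]
    split_ifs with h1 h2 <;> simp_all <;> omega
  rw [Finset.sum_congr rfl inner, Finset.sum_add_distrib,
    Finset.sum_ite_eq' (range m) 0 (fun _ => (N:ℂ)),
    Finset.sum_ite_eq' (range m) N (fun _ => -(N:ℂ))]
  by_cases hmN : m ≤ N
  · rw [if_pos (mem_range.2 hm1), if_neg (by simp; omega : N ∉ range m), if_pos hmN]
    ring
  · rw [if_pos (mem_range.2 hm1), if_pos (mem_range.2 (by omega)), if_neg hmN]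
    ring

/-- (Lemma `le:parabolic2`: interpolation at odd roots of
unity.)  For every `N ≥ 1` there are real numbers `β 0, …, β (2N−1)`,
vanishing for even indices, such that for every odd `k` with
`1 ≤ k ≤ 4N − 1` (note `k ≠ 2N` automatically):
`∑_{ν=0}^{2N−1} β ν · exp(kνπi/(2N)) = i` if `0 < k < 2N`, and `= −i` if
`2N < k < 4N`. -/
theorem stmt_17 (N : ℕ) (hN : 0 < N) :
    ∃ β : ℕ → ℝ, (∀ ν, Even ν → β ν = 0) ∧
      ∀ k : ℕ, Odd k → 1 ≤ k → k ≤ 4 * N - 1 →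
        (∑ ν ∈ Finset.range (2 * N),
            (β ν : ℂ) *
              Complex.exp ((k : ℂ) * (ν : ℂ) * (Real.pi : ℂ) * Complex.I /
                (2 * (N : ℂ))))
          = if k < 2 * N then Complex.I else -Complex.I := by
  have hN' : (N : ℂ) ≠ 0 := Nat.cast_ne_zero.2 hN.ne'
  refine ⟨fun ν => if ν % 2 = 1 then 1/(N * Real.sin (ν * Real.pi/(2*N))) else 0, ?_, ?_⟩
  · intro ν hν
    simp [Nat.even_iff.1 hν]
  intro k hk hk1 hk2
  obtain ⟨m', rfl⟩ := hk
  set m : ℕ := m' + 1 with hm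
  have hm2 : m ≤ 2*N := by omega
  rw [my_sum_range_double]
  have hmain : ∀ j ∈ range N,
      ((if (2*j) % 2 = 1 then 1/((N:ℝ) * Real.sin (((2*j : ℕ) : ℝ) * Real.pi/(2*(N:ℝ)))) else 0 : ℝ) : ℂ) *
        Complex.exp (((2*m'+1 : ℕ) : ℂ) * ((2*j : ℕ) : ℂ) * (Real.pi : ℂ) * Complex.I / (2 * (N : ℂ)))
      + ((if (2*j+1) % 2 = 1 then 1/((N:ℝ) * Real.sin (((2*j+1 : ℕ) : ℝ) * Real.pi/(2*(N:ℝ)))) else 0 : ℝ) : ℂ) *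
        Complex.exp (((2*m'+1 : ℕ) : ℂ) * ((2*j+1 : ℕ) : ℂ) * (Real.pi : ℂ) * Complex.I / (2 * (N : ℂ)))
      = 2*Complex.I/N * (zz N j ^ m / (zz N j - 1)) := by
    intro j hj
    have hjN : j < N := mem_range.1 hj
    rw [if_neg (by omega), if_pos (by omega)]
    set θ : ℝ := ((2*j+1 : ℕ) : ℝ) * Real.pi/(2*(N:ℝ)) with hθ
    set w : ℂ := Complex.exp (((2*j+1 : ℕ) : ℂ) * (Real.pi : ℂ) * Complex.I / (2 * (N : ℂ))) with hwdef
    have hw0 : w ≠ 0 := Complex.exp_ne_zero _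
    have hsin : 0 < Real.sin θ := by
      apply Real.sin_pos_of_pos_of_lt_pi
      · rw [hθ]; positivity
      · rw [hθ, div_lt_iff₀ (by positivity : (0:ℝ) < 2*N)]
        have h1 : ((2*j+1 : ℕ) : ℝ) < 2*N := by exact_mod_cast (by omega : 2*j+1 < 2*N)
        nlinarith [Real.pi_pos]
    have hsC : ((Real.sin θ : ℝ) : ℂ) ≠ 0 := by exact_mod_cast hsin.ne'
    have hexpk : Complex.exp (((2*m'+1 : ℕ) : ℂ) * ((2*j+1 : ℕ) : ℂ) * (Real.pi : ℂ) * Complex.I / (2 * (N : ℂ)))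
        = w ^ (2*m'+1) := by
      rw [hwdef, ← Complex.exp_nat_mul]
      congr 1
      field_simp
    have hz : w^2 = zz N j := by
      rw [hwdef, sq, ← Complex.exp_add, zz]
      congr 1
      field_simp
      ring
    have harg : ((2*j+1 : ℕ) : ℂ) * (Real.pi : ℂ) * Complex.I / (2 * (N : ℂ)) = (θ:ℂ) * Complex.I := by
      rw [hθ]; push_cast; ring
    have hws : w - w⁻¹ = 2 * ((Real.sin θ : ℝ) : ℂ) * Complex.I := by
      rw [hwdef, ← Complex.exp_neg, harg, ← neg_mul, Complex.exp_mul_I, Complex.exp_mul_I,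
        Complex.cos_neg, Complex.sin_neg, Complex.ofReal_sin]
      ring
    have hws' : w^2 - 1 = 2 * ((Real.sin θ : ℝ) : ℂ) * Complex.I * w := by
      linear_combination w * hws + mul_inv_cancel₀ hw0
    have hz1 : w^2 - 1 ≠ 0 := by
      rw [hz]; exact sub_ne_zero.2 (zz_ne_one N j hN)
    have hpow : (w^2)^m = w^(2*m'+1) * w := by
      rw [← pow_mul, show 2*m = 2*m'+1+1 by omega, pow_succ]
    have hsub : ((2*j : ℕ) : ℝ) * Real.pi/(2*(N:ℝ)) = θ - Real.pi/(2*N) := by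
      rw [hθ]; push_cast; ring
    rw [hexpk, Complex.ofReal_zero, zero_mul, zero_add, ← hz, hpow]
    push_cast
    field_simp
    rw [← Complex.ofReal_sin, div_eq_iff hsC]
    linear_combination hws'
  rw [Finset.sum_congr rfl hmain, ← Finset.mul_sum, sum_main N m hN (by omega) hm2]
  have hiff : (2*m'+1 < 2*N) ↔ (m ≤ N) := by omega
  by_cases hc : m ≤ N
  · rw [if_pos hc, if_pos (hiff.2 hc)]
    field_simp
  · rw [if_neg hc, if_neg (fun h => hc (hiff.1 h))]
    field_simp
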